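/- (Step 2 of Bouten–van Handel / quantum Bayes formula.) Let ρ be a faithful density operator, Z a commutative subalgebra, F ∈ Z′ with E[U*XU] = E[F*XF] for all X ∈ Z′ where ρ′ = UρU*. If E[F*F|Z] is invertible, then E′[X|Z] = E[F*F|Z]^{-1} E[F*XF|Z] for all X ∈ Z′. -/

import Mathlib

open Matrix ComplexOrder BigOperators

private lemma trace_mul_conjTranspose_self_eq_zero {n : ℕ}
    {B : Matrix (Fin n) (Fin n) ℂ} (h : (B * Bᴴ).trace = 0) : B = 0 := by
  have hdiag : ∀ i, (B * Bᴴ) i i = dotProduct (B i) (star (B i)) := by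
    intro i
    simp [Matrix.mul_apply, dotProduct, Matrix.conjTranspose_apply]
  have hnn : ∀ i, 0 ≤ (B * Bᴴ) i i := by
    intro i
    rw [hdiag]
    exact Finset.sum_nonneg fun j _ => mul_star_self_nonneg _
  have hzero : ∀ i ∈ Finset.univ, (B * Bᴴ) i i = 0 := by
    rw [← Finset.sum_eq_zero_iff_of_nonneg fun i _ => hnn i]
    exact h
  ext i j
  have := (dotProduct_self_star_eq_zero).1
    ((hdiag i).symm.trans (hzero i (Finset.mem_univ i)))
  simpa using congr_fun this j

open scoped MatrixOrder in
private lemma faithful_aux {n : ℕ} {ρ : Matrix (Fin n) (Fin n) ℂ} (hρ : ρ.PosDef)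
    {A : Matrix (Fin n) (Fin n) ℂ} (h : (ρ * A * Aᴴ).trace = 0) : A = 0 := by
  have hCC : CFC.sqrt ρ * CFC.sqrt ρ = ρ :=
    CFC.sqrt_mul_sqrt_self ρ (Matrix.nonneg_iff_posSemidef.2 hρ.posSemidef)
  set C := CFC.sqrt ρ with hCdef
  have hCH : Cᴴ = C := (Matrix.nonneg_iff_posSemidef.1 (CFC.sqrt_nonneg ρ)).isHermitian
  have h1 : ((C * A) * (C * A)ᴴ).trace = 0 := by
    rw [Matrix.conjTranspose_mul, hCH]
    have e : C * A * (Aᴴ * C) = C * (A * Aᴴ) * C := by simp only [Matrix.mul_assoc]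
    rw [e, Matrix.trace_mul_comm, ← Matrix.mul_assoc, hCC, ← Matrix.mul_assoc]
    exact h
  have hCA : C * A = 0 := trace_mul_conjTranspose_self_eq_zero h1
  have hρA : ρ * A = 0 := by
    rw [← hCC, Matrix.mul_assoc, hCA, Matrix.mul_zero]
  have hGinv : ρ⁻¹ * ρ = 1 :=
    Matrix.nonsing_inv_mul ρ ((Matrix.isUnit_iff_isUnit_det ρ).1 hρ.isUnit)
  calc A = ρ⁻¹ * (ρ * A) := by rw [← Matrix.mul_assoc, hGinv, one_mul]
    _ = 0 := by rw [hρA, Matrix.mul_zero]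

/-- (Step 2 of Bouten–van Handel / quantum Bayes formula.) Let `ρ` be a faithful
density matrix, `Z` a commutative *-subalgebra, `F` in the commutant of `Z` with
`tr(ρ U*XU) = tr(ρ F*XF)` for all `X` in the commutant (i.e. the reference
vector property w.r.t. the rotated state `ρ′ = UρU*`). If `E[F*F|Z]` is
invertible then `E′[X|Z] = E[F*F|Z]⁻¹ E[F*XF|Z]` for all `X` in the commutant. -/
theorem bouten_van_handel_step2 {n : ℕ}
    (ρ : Matrix (Fin n) (Fin n) ℂ) (hρ : ρ.PosDef) (hρtr : ρ.trace = 1)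
    (U : Matrix (Fin n) (Fin n) ℂ) (hU : U ∈ Matrix.unitaryGroup (Fin n) ℂ)
    (Z : StarSubalgebra ℂ (Matrix (Fin n) (Fin n) ℂ))
    (hZcomm : ∀ W₁ ∈ Z, ∀ W₂ ∈ Z, W₁ * W₂ = W₂ * W₁)
    (F : Matrix (Fin n) (Fin n) ℂ)
    (hF : ∀ W ∈ Z, Commute W F)
    (hrep : ∀ X : Matrix (Fin n) (Fin n) ℂ, (∀ W ∈ Z, Commute W X) →
      (ρ * (Uᴴ * X * U)).trace = (ρ * (Fᴴ * X * F)).trace)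
    -- `CE` : conditional expectation onto `Z` w.r.t. `ρ`
    (CE : Matrix (Fin n) (Fin n) ℂ → Matrix (Fin n) (Fin n) ℂ)
    (hCEmem : ∀ A, CE A ∈ Z)
    (hCE : ∀ A, ∀ W ∈ Z, (ρ * CE A * W).trace = (ρ * A * W).trace)
    -- `CE'` : conditional expectation onto `Z` w.r.t. the rotated state `ρ' = UρU*`
    (CE' : Matrix (Fin n) (Fin n) ℂ → Matrix (Fin n) (Fin n) ℂ)
    (hCE'mem : ∀ A, CE' A ∈ Z)
    (hCE' : ∀ A, ∀ W ∈ Z,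
      (U * ρ * Uᴴ * CE' A * W).trace = (U * ρ * Uᴴ * A * W).trace)
    (hinv : IsUnit (CE (Fᴴ * F))) :
    ∀ X : Matrix (Fin n) (Fin n) ℂ, (∀ W ∈ Z, Commute W X) →
      CE' X = (CE (Fᴴ * F))⁻¹ * CE (Fᴴ * X * F) := by
  intro X hX
  have hYmem : CE' X ∈ Z := hCE'mem X
  have hGmem : CE (Fᴴ * F) ∈ Z := hCEmem _
  have hDmem : CE (Fᴴ * X * F) ∈ Z := hCEmem _
  -- key identity: tr(ρ (E[F*F] E'[X]) W) = tr(ρ E[F*XF] W) for all W ∈ Z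
  have key : ∀ W ∈ Z, (ρ * (CE (Fᴴ * F) * CE' X) * W).trace
      = (ρ * CE (Fᴴ * X * F) * W).trace := by
    intro W hW
    have hYW : CE' X * W ∈ Z := mul_mem hYmem hW
    have hXW : ∀ W' ∈ Z, Commute W' (X * W) := fun W' hW' =>
      (hX W' hW').mul_right (hZcomm W' hW' W hW)
    have hYWcomm : ∀ W' ∈ Z, Commute W' (CE' X * W) := fun W' hW' =>
      Commute.mul_right (hZcomm W' hW' _ hYmem) (hZcomm W' hW' W hW)
    have e1 : (ρ * (CE (Fᴴ * F) * CE' X) * W).trace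
        = (ρ * (Fᴴ * F) * (CE' X * W)).trace := by
      rw [show ρ * (CE (Fᴴ * F) * CE' X) * W = ρ * CE (Fᴴ * F) * (CE' X * W) by
        simp only [Matrix.mul_assoc]]
      exact hCE _ _ hYW
    have e2 : (ρ * (Fᴴ * F) * (CE' X * W)).trace
        = (ρ * (Fᴴ * (CE' X * W) * F)).trace := by
      congr 1
      simp only [Matrix.mul_assoc]
      rw [← Matrix.mul_assoc (CE' X) W F, (hF _ hYW).eq]
    have e3 : (ρ * (Fᴴ * (CE' X * W) * F)).trace
        = (ρ * (Uᴴ * (CE' X * W) * U)).trace := (hrep _ hYWcomm).symm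
    have e4 : (ρ * (Uᴴ * (CE' X * W) * U)).trace
        = (U * ρ * Uᴴ * CE' X * W).trace := by
      rw [← Matrix.mul_assoc ρ, Matrix.trace_mul_comm]
      congr 1
      simp only [Matrix.mul_assoc]
    have e5 : (U * ρ * Uᴴ * CE' X * W).trace = (U * ρ * Uᴴ * X * W).trace :=
      hCE' X W hW
    have e6 : (U * ρ * Uᴴ * X * W).trace = (ρ * (Uᴴ * (X * W) * U)).trace := by
      rw [← Matrix.mul_assoc ρ, Matrix.trace_mul_comm (ρ * (Uᴴ * (X * W))) U]
      congr 1
      simp only [Matrix.mul_assoc]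
    have e7 : (ρ * (Uᴴ * (X * W) * U)).trace = (ρ * (Fᴴ * (X * W) * F)).trace :=
      hrep _ hXW
    have e8 : (ρ * (Fᴴ * (X * W) * F)).trace = (ρ * (Fᴴ * X * F) * W).trace := by
      congr 1
      simp only [Matrix.mul_assoc]
      rw [(hF W hW).eq]
    have e9 : (ρ * (Fᴴ * X * F) * W).trace = (ρ * CE (Fᴴ * X * F) * W).trace :=
      (hCE (Fᴴ * X * F) W hW).symm
    rw [e1, e2, e3, e4, e5, e6, e7, e8, e9]
  -- faithfulness: the difference vanishes
  have hGY : CE (Fᴴ * F) * CE' X = CE (Fᴴ * X * F) := by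
    have hAmem : CE (Fᴴ * F) * CE' X - CE (Fᴴ * X * F) ∈ Z :=
      sub_mem (mul_mem hGmem hYmem) hDmem
    have hAH : (CE (Fᴴ * F) * CE' X - CE (Fᴴ * X * F))ᴴ ∈ Z := by
      rw [← Matrix.star_eq_conjTranspose]
      exact star_mem hAmem
    have k := key _ hAH
    have h0 : (ρ * (CE (Fᴴ * F) * CE' X - CE (Fᴴ * X * F))
        * (CE (Fᴴ * F) * CE' X - CE (Fᴴ * X * F))ᴴ).trace = 0 := by
      have hsplit : ρ * (CE (Fᴴ * F) * CE' X - CE (Fᴴ * X * F))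
          * (CE (Fᴴ * F) * CE' X - CE (Fᴴ * X * F))ᴴ
          = ρ * (CE (Fᴴ * F) * CE' X) * (CE (Fᴴ * F) * CE' X - CE (Fᴴ * X * F))ᴴ
            - ρ * CE (Fᴴ * X * F) * (CE (Fᴴ * F) * CE' X - CE (Fᴴ * X * F))ᴴ := by
        noncomm_ring
      rw [hsplit, Matrix.trace_sub, k, sub_self]
    exact sub_eq_zero.mp (faithful_aux hρ h0)
  have hGinvG : (CE (Fᴴ * F))⁻¹ * CE (Fᴴ * F) = 1 :=
    Matrix.nonsing_inv_mul _ ((Matrix.isUnit_iff_isUnit_det _).1 hinv)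
  calc CE' X = ((CE (Fᴴ * F))⁻¹ * CE (Fᴴ * F)) * CE' X := by rw [hGinvG, one_mul]
    _ = (CE (Fᴴ * F))⁻¹ * (CE (Fᴴ * F) * CE' X) := by rw [Matrix.mul_assoc]
    _ = (CE (Fᴴ * F))⁻¹ * CE (Fᴴ * X * F) := by rw [hGY]
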